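/- Let (E,‖·‖) be a 𝒯_c-complete RN module over ℝ with base (Ω,𝓕,P) such that E has the countable concatenation property, k ∈ L⁰₊₊(𝓕), and G ⊆ E a 𝒯_c-closed subset with the countable concatenation property. If f ∈ E* is bounded from above on G, and ε ∈ L⁰₊₊(𝓕) and z ∈ G satisfy ⋁f(G) ≤ f(z) + ε, then there exists x₀ ∈ G such that: (1) x₀ ∈ K(f,k) + z; (2) ‖x₀ − z‖ ≤ k⁻¹·ε; (3) G ∩ (K(f,k) + x₀) = {x₀}. -/

import Mathlib

open MeasureTheory ENNReal Set Filter

namespace GYY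

variable {Ω : Type*} [MeasurableSpace Ω]

/-- `L⁰(𝓕)`: equivalence classes of real-valued random variables on `(Ω,𝓕,P)`. -/
abbrev L0 (P : Measure Ω) := Ω →ₘ[P] ℝ

/-- `L̄⁰(𝓕)`: equivalence classes of extended-real-valued random variables. -/
abbrev L0e (P : Measure Ω) := Ω →ₘ[P] EReal

/-- `L⁰₊₊(𝓕)`: the (classes of) random variables that are strictly positive a.s. -/
def L0pp (P : Measure Ω) : Set (L0 P) := {ε | ∀ᵐ ω ∂P, 0 < ε ω}

/-- The equivalence class `Ĩ_A` of the indicator function of a measurable set `A`. -/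
noncomputable def indL0 (P : Measure Ω) (A : Set Ω) (hA : MeasurableSet A) : L0 P :=
  AEEqFun.mk (A.indicator fun _ => (1 : ℝ)) (aestronglyMeasurable_const.indicator hA)

/-- A random metric space (RM space) with base `(Ω,𝓕,P)`. -/
structure RMSpace (P : Measure Ω) (E : Type*) where
  d : E → E → L0 P
  d_nonneg : ∀ p q, ∀ᵐ ω ∂P, 0 ≤ d p q ω
  d_eq_zero_iff : ∀ p q, d p q = 0 ↔ p = q
  d_symm : ∀ p q, d p q = d q p
  d_triangle : ∀ p q r, ∀ᵐ ω ∂P, d p r ω ≤ d p q ω + d q r ω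

/-- Convergence in probability `P` of a sequence in `L⁰(𝓕)`, i.e. convergence in the
`(ε,λ)`-topology of `L⁰(𝓕)` with the random metric `d(p,q) = |p - q|`. -/
def TendstoProb (P : Measure Ω) (r : ℕ → L0 P) (s : L0 P) : Prop :=
  ∀ ε : ℝ, 0 < ε → ∀ lam ∈ Ioo (0 : ℝ) 1, ∃ N : ℕ, ∀ n ≥ N,
    ENNReal.ofReal (1 - lam) < P {ω | |r n ω - s ω| < ε}

namespace RMSpace

variable {P : Measure Ω} {E : Type*} (M : RMSpace P E)

/-- Convergence of a sequence in the `(ε,λ)`-topology of an RM space. -/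
def TendstoEL (x : ℕ → E) (a : E) : Prop :=
  ∀ ε : ℝ, 0 < ε → ∀ lam ∈ Ioo (0 : ℝ) 1, ∃ N : ℕ, ∀ n ≥ N,
    ENNReal.ofReal (1 - lam) < P {ω | M.d (x n) a ω < ε}

/-- Cauchy sequence for the `d_{ε,λ}`-uniformity of an RM space. -/
def CauchySeqEL (x : ℕ → E) : Prop :=
  ∀ ε : ℝ, 0 < ε → ∀ lam ∈ Ioo (0 : ℝ) 1, ∃ N : ℕ, ∀ m ≥ N, ∀ n ≥ N,
    ENNReal.ofReal (1 - lam) < P {ω | M.d (x m) (x n) ω < ε}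

/-- `d_{ε,λ}`-completeness of an RM space (the `d_{ε,λ}`-uniformity is metrizable, hence
completeness is equivalent to sequential completeness). -/
def CompleteEL : Prop := ∀ x : ℕ → E, M.CauchySeqEL x → ∃ a, M.TendstoEL x a

/-- `φ : E → L̄⁰(𝓕)` is `𝒯_{ε,λ}`-lower semicontinuous: its epigraph
`epi(φ) = {(x,r) ∈ E × L⁰ : φ(x) ≤ r}` is closed in
`(E,𝒯_{ε,λ}) × (L⁰(𝓕),𝒯_{ε,λ})` (sequentially; both topologies are metrizable). -/
def LscEL (φ : E → L0e P) : Prop :=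
  ∀ (x : ℕ → E) (r : ℕ → L0 P) (a : E) (s : L0 P),
    (∀ n, ∀ᵐ ω ∂P, φ (x n) ω ≤ (r n ω : EReal)) →
    M.TendstoEL x a → TendstoProb P r s →
    ∀ᵐ ω ∂P, φ a ω ≤ (s ω : EReal)

end RMSpace

/-- `φ` is proper on `G`: `φ(x) > -∞` a.s. for every `x ∈ G`, and `φ(x) < +∞` a.s.
for some `x ∈ G`. -/
def ProperOn {E : Type*} {P : Measure Ω} (φ : E → L0e P) (G : Set E) : Prop :=
  (∀ x ∈ G, ∀ᵐ ω ∂P, ⊥ < φ x ω) ∧ ∃ x ∈ G, ∀ᵐ ω ∂P, φ x ω < ⊤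

/-- `φ` is bounded from below on `G` by an element of `L⁰(𝓕)`. -/
def BddBelowOn {E : Type*} {P : Measure Ω} (φ : E → L0e P) (G : Set E) : Prop :=
  ∃ ξ : L0 P, ∀ x ∈ G, ∀ᵐ ω ∂P, (ξ ω : EReal) ≤ φ x ω

/-- `φ` is bounded from above on `G` by an element of `L⁰(𝓕)`. -/
def BddAboveOn {E : Type*} {P : Measure Ω} (φ : E → L0e P) (G : Set E) : Prop :=
  ∃ ξ : L0 P, ∀ x ∈ G, ∀ᵐ ω ∂P, φ x ω ≤ (ξ ω : EReal)

/-- `η = ⋀ φ(G)`, the infimum of `φ(G)` in the complete lattice `L̄⁰(𝓕)`. -/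
def IsInfOn {E : Type*} {P : Measure Ω} (φ : E → L0e P) (G : Set E) (η : L0e P) : Prop :=
  (∀ x ∈ G, ∀ᵐ ω ∂P, η ω ≤ φ x ω) ∧
    ∀ ζ : L0e P, (∀ x ∈ G, ∀ᵐ ω ∂P, ζ ω ≤ φ x ω) → ∀ᵐ ω ∂P, ζ ω ≤ η ω

/-- `η = ⋁ φ(G)`, the supremum of `φ(G)` in the complete lattice `L̄⁰(𝓕)`. -/
def IsSupOn {E : Type*} {P : Measure Ω} (φ : E → L0e P) (G : Set E) (η : L0e P) : Prop :=
  (∀ x ∈ G, ∀ᵐ ω ∂P, φ x ω ≤ η ω) ∧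
    ∀ ζ : L0e P, (∀ x ∈ G, ∀ᵐ ω ∂P, φ x ω ≤ ζ ω) → ∀ᵐ ω ∂P, η ω ≤ ζ ω

/-- `s = ⋁ g(G)` for an `L⁰(𝓕)`-valued function `g`. -/
def IsSupOnR {E : Type*} {P : Measure Ω} (g : E → L0 P) (G : Set E) (s : L0 P) : Prop :=
  (∀ x ∈ G, ∀ᵐ ω ∂P, g x ω ≤ s ω) ∧
    ∀ c : L0 P, (∀ x ∈ G, ∀ᵐ ω ∂P, g x ω ≤ c ω) → ∀ᵐ ω ∂P, s ω ≤ c ω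

/-- The Cauchy property (for the `d_{ε,λ}`-uniformity of `L⁰(𝓕)`, i.e. the uniformity of
convergence in probability) of the net `{φ(m) : m ∈ M}` indexed by `M` directed by the
order of `X`. -/
def CauchyNetProb {X : Type*} [Preorder X] {P : Measure Ω} (φ : X → L0e P) (M : Set X) : Prop :=
  ∀ ε : ℝ, 0 < ε → ∀ lam ∈ Ioo (0 : ℝ) 1, ∃ m₀ ∈ M, ∀ m₁ ∈ M, ∀ m₂ ∈ M,
    m₀ ≤ m₁ → m₀ ≤ m₂ →
      ENNReal.ofReal (1 - lam) < P {ω | |(φ m₁ ω).toReal - (φ m₂ ω).toReal| < ε}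

/-- The section filter of the net `{x_g : g ∈ G}`, `x_g = g`, indexed by `G` directed by the
order of `X`; the net is Cauchy iff this filter is a Cauchy filter. -/
def netFilter {X : Type*} [Preorder X] (G : Set X) : Filter X :=
  ⨅ g ∈ G, 𝓟 {y | y ∈ G ∧ g ≤ y}

/-- A random normed module (RN module) over `ℝ` with base `(Ω,𝓕,P)`: a left module `E`
over the algebra `L⁰(𝓕)` together with an `L⁰`-norm. -/
structure RNModule (P : Measure Ω) (E : Type*) [AddCommGroup E] where
  smul : L0 P → E → E
  one_smul : ∀ x, smul 1 x = x
  mul_smul : ∀ ξ η x, smul (ξ * η) x = smul ξ (smul η x)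
  smul_add : ∀ ξ x y, smul ξ (x + y) = smul ξ x + smul ξ y
  add_smul : ∀ ξ η x, smul (ξ + η) x = smul ξ x + smul η x
  nm : E → L0 P
  nm_nonneg : ∀ x, ∀ᵐ ω ∂P, 0 ≤ nm x ω
  nm_eq_zero_iff : ∀ x, nm x = 0 ↔ x = 0
  nm_smul : ∀ ξ x, ∀ᵐ ω ∂P, nm (smul ξ x) ω = |ξ ω| * nm x ω
  nm_add_le : ∀ x y, ∀ᵐ ω ∂P, nm (x + y) ω ≤ nm x ω + nm y ω

/-- The `𝒯_c`-neighbourhood filter of a point `r` of `L⁰(𝓕)`, with base the closed balls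
`{s : |s - r| ≤ ε}`, `ε ∈ L⁰₊₊`. -/
def cNhdsL0 (P : Measure Ω) (r : L0 P) : Filter (L0 P) :=
  ⨅ ε ∈ L0pp P, 𝓟 {s | ∀ᵐ ω ∂P, |s ω - r ω| ≤ ε ω}

namespace RNModule

variable {P : Measure Ω} {E : Type*} [AddCommGroup E] (N : RNModule P E)

/-- Convergence of sequences in the `(ε,λ)`-topology `𝒯_{ε,λ}` of an RN module. -/
def TendstoEL (x : ℕ → E) (a : E) : Prop :=
  ∀ ε : ℝ, 0 < ε → ∀ lam ∈ Ioo (0 : ℝ) 1, ∃ N' : ℕ, ∀ n ≥ N',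
    ENNReal.ofReal (1 - lam) < P {ω | N.nm (x n - a) ω < ε}

/-- Cauchy sequence for the `d_{ε,λ}`-uniformity of an RN module. -/
def CauchySeqEL (x : ℕ → E) : Prop :=
  ∀ ε : ℝ, 0 < ε → ∀ lam ∈ Ioo (0 : ℝ) 1, ∃ N' : ℕ, ∀ m ≥ N', ∀ n ≥ N',
    ENNReal.ofReal (1 - lam) < P {ω | N.nm (x m - x n) ω < ε}

/-- `𝒯_{ε,λ}`-completeness (the `d_{ε,λ}`-uniformity is metrizable, hence completeness is
equivalent to sequential completeness). -/
def CompleteEL : Prop := ∀ x : ℕ → E, N.CauchySeqEL x → ∃ a, N.TendstoEL x a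

/-- `G` is `𝒯_{ε,λ}`-closed (sequentially; `𝒯_{ε,λ}` is metrizable). -/
def ClosedEL (G : Set E) : Prop :=
  ∀ (x : ℕ → E) (a : E), (∀ n, x n ∈ G) → N.TendstoEL x a → a ∈ G

/-- `φ : G → L̄⁰(𝓕)` is `𝒯_{ε,λ}`-lower semicontinuous on `G`: its epigraph
`{(x,r) ∈ G × L⁰ : φ(x) ≤ r}` is closed in `(G,𝒯_{ε,λ}) × (L⁰(𝓕),𝒯_{ε,λ})`. -/
def LscELOn (φ : E → L0e P) (G : Set E) : Prop :=
  ∀ (x : ℕ → E) (r : ℕ → L0 P) (a : E) (s : L0 P),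
    (∀ n, x n ∈ G) → a ∈ G →
    (∀ n, ∀ᵐ ω ∂P, φ (x n) ω ≤ (r n ω : EReal)) →
    N.TendstoEL x a → TendstoProb P r s →
    ∀ᵐ ω ∂P, φ a ω ≤ (s ω : EReal)

/-- The neighbourhood filter of `x` in the locally `L⁰`-convex topology `𝒯_c`,
whose base consists of the closed balls `{y : ‖y - x‖ ≤ ε}`, `ε ∈ L⁰₊₊`. -/
def cNhds (x : E) : Filter E :=
  ⨅ ε ∈ L0pp P, 𝓟 {y | ∀ᵐ ω ∂P, N.nm (y - x) ω ≤ ε ω}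

/-- The `d_c`-uniformity of an RN module, with base `{U(ε) : ε ∈ L⁰₊₊}`,
`U(ε) = {(p,q) : ‖p - q‖ ≤ ε}`. -/
def cUniformity : Filter (E × E) :=
  ⨅ ε ∈ L0pp P, 𝓟 {p | ∀ᵐ ω ∂P, N.nm (p.1 - p.2) ω ≤ ε ω}

/-- `𝒯_c`-completeness: every Cauchy filter for the `d_c`-uniformity converges. -/
def cComplete : Prop :=
  ∀ F : Filter E, F.NeBot → F ×ˢ F ≤ N.cUniformity → ∃ x, F ≤ N.cNhds x

/-- The `𝒯_c`-closure of a subset. -/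
def cClosure (G : Set E) : Set E := {x | (N.cNhds x ⊓ 𝓟 G).NeBot}

/-- `G` is `𝒯_c`-closed. -/
def cClosed (G : Set E) : Prop := ∀ x, x ∈ N.cClosure G → x ∈ G

/-- `S` is `𝒯_c`-dense in `T`. -/
def cDenseIn (S T : Set E) : Prop := ∀ x ∈ T, x ∈ N.cClosure S

/-- The `𝒯_c`-boundary `∂_c G`. -/
def cBoundary (G : Set E) : Set E := N.cClosure G ∩ N.cClosure Gᶜ

/-- `φ : G → L̄⁰(𝓕)` is `𝒯_c`-lower semicontinuous on `G`: its epigraph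
`{(x,r) ∈ G × L⁰ : φ(x) ≤ r}` is closed in `(G,𝒯_c) × (L⁰(𝓕),𝒯_c)`. -/
def cLscOn (φ : E → L0e P) (G : Set E) : Prop :=
  ∀ (a : E) (s : L0 P), a ∈ G →
    ((N.cNhds a ×ˢ cNhdsL0 P s) ⊓
      𝓟 {p : E × L0 P | p.1 ∈ G ∧ ∀ᵐ ω ∂P, φ p.1 ω ≤ (p.2 ω : EReal)}).NeBot →
    ∀ᵐ ω ∂P, φ a ω ≤ (s ω : EReal)

/-- The countable concatenation property of a subset `G` of an RN module. -/
def HasCC (G : Set E) : Prop :=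
  ∀ (x : ℕ → E), (∀ n, x n ∈ G) →
    ∀ (A : ℕ → Set Ω) (hA : ∀ n, MeasurableSet (A n)),
      (∀ i j, i ≠ j → Disjoint (A i) (A j)) → (⋃ n, A n) = univ →
        ∃ y ∈ G, ∀ n, N.smul (indL0 P (A n) (hA n)) y = N.smul (indL0 P (A n) (hA n)) (x n)

/-- The countable concatenation property of a subset of the product `L⁰(𝓕)`-module
`E × L⁰(𝓕)` (with componentwise module operations). -/
def HasCCProd (G : Set (E × L0 P)) : Prop :=
  ∀ (p : ℕ → E × L0 P), (∀ n, p n ∈ G) →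
    ∀ (A : ℕ → Set Ω) (hA : ∀ n, MeasurableSet (A n)),
      (∀ i j, i ≠ j → Disjoint (A i) (A j)) → (⋃ n, A n) = univ →
        ∃ q ∈ G, ∀ n,
          N.smul (indL0 P (A n) (hA n)) q.1 = N.smul (indL0 P (A n) (hA n)) (p n).1 ∧
          indL0 P (A n) (hA n) * q.2 = indL0 P (A n) (hA n) * (p n).2

/-- The local property of an `L̄⁰(𝓕)`-valued function:
`Ĩ_A·φ(x) = Ĩ_A·φ(Ĩ_A·x)` for all `x ∈ E`, `A ∈ 𝓕`, i.e. `φ(x) = φ(Ĩ_A x)` a.s. on `A`. -/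
def LocalProp (φ : E → L0e P) : Prop :=
  ∀ (x : E) (A : Set Ω) (hA : MeasurableSet A),
    ∀ᵐ ω ∂P, ω ∈ A → φ x ω = φ (N.smul (indL0 P A hA) x) ω

/-- `G` is `L⁰(𝓕)`-convex. -/
def L0Convex (G : Set E) : Prop :=
  ∀ x ∈ G, ∀ y ∈ G, ∀ ξ η : L0 P,
    (∀ᵐ ω ∂P, 0 ≤ ξ ω) → (∀ᵐ ω ∂P, 0 ≤ η ω) → ξ + η = 1 →
      N.smul ξ x + N.smul η y ∈ G

/-- `G` is a.s. bounded: `⋁{‖p‖ : p ∈ G} ∈ L⁰₊(𝓕)`. -/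
def ASBounded (G : Set E) : Prop :=
  ∃ ξ : L0 P, ∀ p ∈ G, ∀ᵐ ω ∂P, N.nm p ω ≤ ξ ω

/-- Membership in the random conjugate space `E*`: `f` is an a.s. bounded random linear
functional, i.e. an `L⁰(𝓕)`-linear map `f : E → L⁰(𝓕)` with `|f(x)| ≤ ξ·‖x‖` for all `x`
for some `ξ ∈ L⁰₊(𝓕)`. -/
def IsDual (f : E → L0 P) : Prop :=
  (∀ x y, f (x + y) = f x + f y) ∧
  (∀ (ξ : L0 P) (x : E), f (N.smul ξ x) = ξ * f x) ∧
  ∃ ξ : L0 P, (∀ᵐ ω ∂P, 0 ≤ ξ ω) ∧ ∀ x, ∀ᵐ ω ∂P, |f x ω| ≤ ξ ω * N.nm x ω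

/-- `nf = ‖f‖* := ⋀{ξ ∈ L⁰₊ : |f(x)| ≤ ξ‖x‖ for all x ∈ E}`, the random norm of `E*`. -/
def IsDualNorm (f : E → L0 P) (nf : L0 P) : Prop :=
  (∀ ξ : L0 P, ((∀ᵐ ω ∂P, 0 ≤ ξ ω) ∧ ∀ x, ∀ᵐ ω ∂P, |f x ω| ≤ ξ ω * N.nm x ω) →
    ∀ᵐ ω ∂P, nf ω ≤ ξ ω) ∧
  (∀ c : L0 P,
    (∀ ξ : L0 P, ((∀ᵐ ω ∂P, 0 ≤ ξ ω) ∧ ∀ x, ∀ᵐ ω ∂P, |f x ω| ≤ ξ ω * N.nm x ω) →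
      ∀ᵐ ω ∂P, c ω ≤ ξ ω) → ∀ᵐ ω ∂P, c ω ≤ nf ω)

/-- The cone `K(f,k) = {y ∈ E : k‖y‖ ≤ f(y)}`. -/
def Kcone (f : E → L0 P) (k : L0 P) : Set E := {y | ∀ᵐ ω ∂P, k ω * N.nm y ω ≤ f y ω}

/-- `f ∈ E*∖{0}`, bounded from above on `G`, supports `G` at some point:
`f(x) = ⋁f(G)` for some `x ∈ G`. -/
def Supports (G : Set E) (f : E → L0 P) : Prop :=
  N.IsDual f ∧ f ≠ 0 ∧ (∃ ξ : L0 P, ∀ x ∈ G, ∀ᵐ ω ∂P, f x ω ≤ ξ ω) ∧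
    ∃ x ∈ G, IsSupOnR f G (f x)

/-- The set of support points of `G`: points `x ∈ G` at which some
`f ∈ E*∖{0}`, bounded from above on `G`, attains `f(x) = ⋁f(G)`. -/
def SupportPoints (G : Set E) : Set E :=
  {x | x ∈ G ∧ ∃ f : E → L0 P, N.IsDual f ∧ f ≠ 0 ∧
    (∃ ξ : L0 P, ∀ y ∈ G, ∀ᵐ ω ∂P, f y ω ≤ ξ ω) ∧ IsSupOnR f G (f x)}

end RNModule


section Aux
set_option linter.unusedSectionVars false

variable {Ω : Type*} [MeasurableSpace Ω] {P : Measure Ω} [IsProbabilityMeasure P]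
variable {E : Type*} [AddCommGroup E]

lemma indL0_coe {P : Measure Ω} (A : Set Ω) (hA : MeasurableSet A) :
    ∀ᵐ ω ∂P, (indL0 P A hA) ω = A.indicator (fun _ => (1 : ℝ)) ω :=
  AEEqFun.coeFn_mk _ _

namespace RNModule

variable (N : RNModule P E)

lemma zero_smul' (x : E) : N.smul 0 x = 0 := by
  have h := N.add_smul 0 0 x
  rw [add_zero] at h
  exact left_eq_add.mp h

lemma neg_one_smul' (x : E) : N.smul (-1) x = -x := by
  have h := N.add_smul 1 (-1) x
  rw [add_neg_cancel, zero_smul', N.one_smul] at h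
  exact (eq_neg_of_add_eq_zero_right h.symm)

lemma smul_zero' (ξ : L0 P) : N.smul ξ (0 : E) = 0 := by
  have h := N.smul_add ξ 0 0
  rw [add_zero] at h
  exact left_eq_add.mp h

lemma smul_neg' (ξ : L0 P) (x : E) : N.smul ξ (-x) = -(N.smul ξ x) := by
  have h := N.smul_add ξ x (-x)
  rw [add_neg_cancel, smul_zero'] at h
  exact eq_neg_of_add_eq_zero_right h.symm

lemma smul_sub' (ξ : L0 P) (x y : E) : N.smul ξ (x - y) = N.smul ξ x - N.smul ξ y := by
  rw [sub_eq_add_neg, N.smul_add, smul_neg', sub_eq_add_neg]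

lemma nm_zero_ae : ∀ᵐ ω ∂P, N.nm 0 ω = 0 := by
  have h : N.nm 0 = 0 := (N.nm_eq_zero_iff 0).2 rfl
  rw [h]
  exact AEEqFun.coeFn_zero

lemma nm_neg_ae (x : E) : ∀ᵐ ω ∂P, N.nm (-x) ω = N.nm x ω := by
  have h := N.nm_smul (-1) x
  rw [N.neg_one_smul'] at h
  filter_upwards [h, AEEqFun.coeFn_neg (1 : L0 P), AEEqFun.coeFn_one (α := Ω) (μ := P) (β := ℝ)]
    with ω h1 h2 h3
  rw [h1, h2]
  simp only [Pi.neg_apply, h3, Pi.one_apply, abs_neg, abs_one, one_mul]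

lemma nm_sub_comm (x y : E) : ∀ᵐ ω ∂P, N.nm (x - y) ω = N.nm (y - x) ω := by
  have h := N.nm_neg_ae (y - x)
  rw [neg_sub] at h
  exact h

lemma nm_tri (u v w : E) : ∀ᵐ ω ∂P, N.nm (u - w) ω ≤ N.nm (u - v) ω + N.nm (v - w) ω := by
  have h := N.nm_add_le (u - v) (v - w)
  rw [sub_add_sub_cancel] at h
  exact h

lemma f_zero {f : E → L0 P} (hf : N.IsDual f) : f 0 = 0 := by
  have h := hf.1 0 0
  rw [add_zero] at h
  exact left_eq_add.mp h

lemma f_sub {f : E → L0 P} (hf : N.IsDual f) (x y : E) : f (x - y) = f x - f y := by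
  have h := hf.1 (x - y) y
  rw [sub_add_cancel] at h
  exact (eq_sub_of_add_eq h.symm).symm ▸ rfl

/-- a.e. equality of two points of the module on a measurable set. -/
def AeqOn (x y : E) (A : Set Ω) : Prop := ∀ᵐ ω ∂P, ω ∈ A → N.nm (x - y) ω = 0

lemma aeq_of_ind_smul {u v : E} {A : Set Ω} (hA : MeasurableSet A)
    (h : N.smul (indL0 P A hA) u = N.smul (indL0 P A hA) v) : N.AeqOn u v A := by
  have h2 : N.smul (indL0 P A hA) (u - v) = 0 := by
    rw [N.smul_sub', h, sub_self]
  have h3 : N.nm (N.smul (indL0 P A hA) (u - v)) = 0 := (N.nm_eq_zero_iff _).2 h2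
  have h4 : ∀ᵐ ω ∂P, N.nm (N.smul (indL0 P A hA) (u - v)) ω = 0 := by
    rw [h3]; exact AEEqFun.coeFn_zero
  filter_upwards [h4, N.nm_smul (indL0 P A hA) (u - v), indL0_coe (P := P) A hA] with ω h1 h2' h3' hmem
  rw [h2', h3', Set.indicator_of_mem hmem] at h1
  simpa using h1

lemma AeqOn.nm_eq {u v : E} {A : Set Ω} (h : N.AeqOn u v A) (w : E) :
    ∀ᵐ ω ∂P, ω ∈ A → N.nm (u - w) ω = N.nm (v - w) ω := by
  filter_upwards [h, N.nm_tri u v w, N.nm_tri v u w, N.nm_sub_comm v u] with ω h1 h2 h3 h4 hmem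
  have h5 := h1 hmem
  rw [h5, zero_add] at h2
  rw [h4, h5, zero_add] at h3
  exact le_antisymm h2 h3

lemma AeqOn.f_eq {f : E → L0 P} (hf : N.IsDual f) {u v : E} {A : Set Ω} (h : N.AeqOn u v A) :
    ∀ᵐ ω ∂P, ω ∈ A → f u ω = f v ω := by
  obtain ⟨ξf, -, hb⟩ := hf.2.2
  have e : f u = f v + f (u - v) := by
    have h1 := hf.1 v (u - v)
    rw [add_sub_cancel] at h1
    exact h1
  have ec : ∀ᵐ ω ∂P, f u ω = f v ω + f (u - v) ω := by
    rw [e]; exact AEEqFun.coeFn_add _ _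
  filter_upwards [ec, hb (u - v), h] with ω h1 h2 h3 hmem
  have h4 : f (u - v) ω = 0 := by
    have := h2.trans (by rw [h3 hmem, mul_zero])
    exact abs_nonpos_iff.mp this
  rw [h1, h4, add_zero]

/-- The order relation `v ⪯ u` given by the cone `K(f,k)`. -/
def Rel (k : L0 P) (f : E → L0 P) (v u : E) : Prop :=
  ∀ᵐ ω ∂P, k ω * N.nm (u - v) ω ≤ f u ω - f v ω

lemma rel_refl (k : L0 P) (f : E → L0 P) (v : E) : N.Rel k f v v := by
  filter_upwards [N.nm_zero_ae] with ω h1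
  rw [sub_self, h1, mul_zero, sub_self]

lemma rel_trans {k : L0 P} (hk0 : ∀ᵐ ω ∂P, 0 ≤ k ω) {f : E → L0 P} {v u w : E}
    (h1 : N.Rel k f v u) (h2 : N.Rel k f u w) : N.Rel k f v w := by
  filter_upwards [hk0, h1, h2, N.nm_tri w u v] with ω hk ha hb htri
  have := mul_le_mul_of_nonneg_left htri hk
  rw [mul_add] at this
  calc k ω * N.nm (w - v) ω ≤ k ω * N.nm (w - u) ω + k ω * N.nm (u - v) ω := this
    _ ≤ (f w ω - f u ω) + (f u ω - f v ω) := add_le_add hb ha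
    _ = f w ω - f v ω := by ring

lemma rel_f_le {k : L0 P} (hk : k ∈ L0pp P) {f : E → L0 P} {v u : E}
    (h : N.Rel k f v u) : ∀ᵐ ω ∂P, f v ω ≤ f u ω := by
  filter_upwards [hk, h, N.nm_nonneg (u - v)] with ω h1 h2 h3
  nlinarith

lemma rel_local {k : L0 P} {f : E → L0 P} (hf : N.IsDual f) {v u : E} (A : ℕ → Set Ω)
    (hcov : ∀ᵐ ω ∂P, ∃ j, ω ∈ A j) (u' : ℕ → E)
    (haeq : ∀ j, N.AeqOn u (u' j) (A j)) (hrel : ∀ j, N.Rel k f v (u' j)) :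
    N.Rel k f v u := by
  have h1 : ∀ᵐ ω ∂P, ∀ j, ω ∈ A j → N.nm (u - v) ω = N.nm (u' j - v) ω :=
    ae_all_iff.2 fun j => AeqOn.nm_eq N (haeq j) v
  have h2 : ∀ᵐ ω ∂P, ∀ j, ω ∈ A j → f u ω = f (u' j) ω :=
    ae_all_iff.2 fun j => AeqOn.f_eq N hf (haeq j)
  have h3 : ∀ᵐ ω ∂P, ∀ j, k ω * N.nm (u' j - v) ω ≤ f (u' j) ω - f v ω := ae_all_iff.2 hrel
  filter_upwards [hcov, h1, h2, h3] with ω hc ha hb hr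
  obtain ⟨j, hj⟩ := hc
  rw [ha j hj, hb j hj]
  exact hr j

end RNModule

/-- Refine an a.e.-covering countable measurable family into an exact measurable partition. -/
lemma exists_partition {P : Measure Ω} [IsProbabilityMeasure P] (B : ℕ → Set Ω)
    (hB : ∀ j, MeasurableSet (B j)) (hcov : ∀ᵐ ω ∂P, ∃ j, ω ∈ B j) :
    ∃ A : ℕ → Set Ω, (∀ j, MeasurableSet (A j)) ∧ (∀ i j, i ≠ j → Disjoint (A i) (A j)) ∧
      (⋃ j, A j) = Set.univ ∧ ∀ᵐ ω ∂P, ∀ j, ω ∈ A j → ω ∈ B j := by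
  classical
  set C := disjointed B with hC
  refine ⟨fun j => if j = 0 then C 0 ∪ (⋃ i, B i)ᶜ else C j, ?_, ?_, ?_, ?_⟩
  · intro j
    by_cases h : j = 0
    · simp only [h, reduceIte]
      exact (MeasurableSet.disjointed hB 0).union (MeasurableSet.iUnion hB).compl
    · simp only [if_neg h]
      exact MeasurableSet.disjointed hB j
  · intro i j hij
    have hd := disjoint_disjointed B hij
    have hsub : ∀ l, C l ⊆ ⋃ i, B i := fun l =>
      (disjointed_subset B l).trans (Set.subset_iUnion B l)
    by_cases hi : i = 0
    · subst hi
      have hj0 : j ≠ 0 := fun h => hij h.symm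
      simp only [if_neg hj0, reduceIte]
      exact Set.disjoint_union_left.2 ⟨hd, (disjoint_compl_left).mono_right (hsub j)⟩
    · by_cases hj : j = 0
      · subst hj
        simp only [if_neg hi, reduceIte]
        exact Set.disjoint_union_right.2
          ⟨disjoint_disjointed B hij, disjoint_compl_right.mono_left (hsub i)⟩
      · simp only [if_neg hi, if_neg hj]; exact hd
  · ext ω
    simp only [Set.mem_iUnion, Set.mem_univ, iff_true]
    by_cases h : ω ∈ ⋃ i, B i
    · have : ω ∈ ⋃ i, C i := by rw [hC, iUnion_disjointed]; exact h
      obtain ⟨j, hj⟩ := Set.mem_iUnion.1 this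
      by_cases hj0 : j = 0
      · exact ⟨0, by simp only [reduceIte]; exact Or.inl (hj0 ▸ hj)⟩
      · exact ⟨j, by simp only [if_neg hj0]; exact hj⟩
    · exact ⟨0, by simp only [reduceIte]; exact Or.inr h⟩
  · have hcov' : ∀ᵐ ω ∂P, ω ∈ ⋃ i, B i := by
      filter_upwards [hcov] with ω h
      exact Set.mem_iUnion.2 h
    filter_upwards [hcov'] with ω h j hj
    by_cases hj0 : j = 0
    · subst hj0
      simp only [reduceIte] at hj
      rcases hj with hj | hj
      · exact disjointed_subset B 0 hj
      · exact absurd h hj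
    · simp only [if_neg hj0] at hj
      exact disjointed_subset B j hj

end Aux
section Aux2
set_option linter.unusedSectionVars false

variable {Ω : Type*} [MeasurableSpace Ω] {P : Measure Ω} [IsProbabilityMeasure P]
variable {E : Type*} [AddCommGroup E]

namespace RNModule

variable (N : RNModule P E)

lemma glue_of_partition {G : Set E} (hGCC : N.HasCC G) (u : ℕ → E) (hu : ∀ j, u j ∈ G)
    {A : ℕ → Set Ω} (hA : ∀ j, MeasurableSet (A j))
    (hdis : ∀ i j, i ≠ j → Disjoint (A i) (A j)) (huniv : (⋃ j, A j) = Set.univ) :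
    ∃ w ∈ G, ∀ j, N.AeqOn w (u j) (A j) := by
  obtain ⟨w, hwG, hw⟩ := hGCC u hu A hA hdis huniv
  exact ⟨w, hwG, fun j => N.aeq_of_ind_smul (hA j) (hw j)⟩

lemma glue2_max {G : Set E} (hGCC : N.HasCC G) {k : L0 P} {f : E → L0 P} (hf : N.IsDual f)
    {v u₁ u₂ : E} (h1 : u₁ ∈ G) (h2 : u₂ ∈ G)
    (hr1 : N.Rel k f v u₁) (hr2 : N.Rel k f v u₂) :
    ∃ w ∈ G, N.Rel k f v w ∧ ∀ᵐ ω ∂P, f w ω = max (f u₁ ω) (f u₂ ω) := by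
  classical
  set A : Set Ω := {ω | f u₂ ω ≤ f u₁ ω} with hA
  have hAmeas : MeasurableSet A :=
    measurableSet_le (f u₂).stronglyMeasurable.measurable (f u₁).stronglyMeasurable.measurable
  set As : ℕ → Set Ω := fun j => if j = 0 then A else if j = 1 then Aᶜ else ∅ with hAs
  set us : ℕ → E := fun j => if j = 0 then u₁ else u₂ with hus
  have hAsmeas : ∀ j, MeasurableSet (As j) := by
    intro j
    by_cases h0 : j = 0
    · simpa [hAs, h0] using hAmeas
    · by_cases h1' : j = 1
      · simpa [hAs, h0, h1'] using hAmeas.compl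
      · simp [hAs, h0, h1']
  have hAsdis : ∀ i j, i ≠ j → Disjoint (As i) (As j) := by
    intro i j hij
    match i, j with
    | 0, 0 => exact absurd rfl hij
    | 1, 1 => exact absurd rfl hij
    | 0, 1 => simpa [hAs] using disjoint_compl_right
    | 1, 0 => simpa [hAs] using disjoint_compl_left
    | 0, (j+2) => simp [hAs]
    | 1, (j+2) => simp [hAs]
    | (i+2), j => simp [hAs]
  have hAsuniv : (⋃ j, As j) = Set.univ := by
    ext ω
    simp only [Set.mem_iUnion, Set.mem_univ, iff_true]
    by_cases h : ω ∈ A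
    · exact ⟨0, by simpa [hAs] using h⟩
    · exact ⟨1, by simpa [hAs] using h⟩
  have husG : ∀ j, us j ∈ G := by
    intro j; by_cases h0 : j = 0 <;> simp [hus, h0, h1, h2]
  obtain ⟨w, hwG, hwaeq⟩ := N.glue_of_partition hGCC us husG hAsmeas hAsdis hAsuniv
  have hcov : ∀ᵐ ω ∂P, ∃ j, ω ∈ As j := by
    refine Filter.Eventually.of_forall fun ω => ?_
    have : ω ∈ ⋃ j, As j := hAsuniv ▸ Set.mem_univ ω
    exact Set.mem_iUnion.1 this
  have hrel : N.Rel k f v w := by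
    refine N.rel_local hf As hcov us hwaeq fun j => ?_
    by_cases h0 : j = 0 <;> simp [hus, h0, hr1, hr2]
  refine ⟨w, hwG, hrel, ?_⟩
  have e0 : ∀ᵐ ω ∂P, ω ∈ A → f w ω = f u₁ ω := by
    have := AeqOn.f_eq N hf (hwaeq 0)
    simpa [hAs, hus] using this
  have e1 : ∀ᵐ ω ∂P, ω ∈ Aᶜ → f w ω = f u₂ ω := by
    have := AeqOn.f_eq N hf (hwaeq 1)
    simpa [hAs, hus] using this
  filter_upwards [e0, e1] with ω he0 he1
  by_cases h : ω ∈ A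
  · rw [he0 h, max_eq_left (by exact h)]
  · rw [he1 h, max_eq_right (le_of_not_ge (by exact h))]

end RNModule

lemma arctan_int {g : Ω → ℝ} (hg : AEStronglyMeasurable g P) :
    Integrable (fun ω => Real.arctan (g ω)) P := by
  refine Integrable.mono' (integrable_const (Real.pi / 2))
    (Real.continuous_arctan.comp_aestronglyMeasurable hg) (Filter.Eventually.of_forall fun ω => ?_)
  rw [Real.norm_eq_abs]
  exact abs_le.2 ⟨(Real.neg_pi_div_two_lt_arctan _).le, (Real.arctan_lt_pi_div_two _).le⟩

namespace RNModule

variable (N : RNModule P E)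

lemma exists_almost_sup {G : Set E} (hGCC : N.HasCC G) {k : L0 P} (hk : k ∈ L0pp P)
    {f : E → L0 P} (hf : N.IsDual f)
    {ξ : L0 P} (hξ : ∀ x ∈ G, ∀ᵐ ω ∂P, f x ω ≤ ξ ω)
    {v : E} (hv : v ∈ G) {δ : ℝ} (hδ : 0 < δ) :
    ∃ w, (w ∈ G ∧ N.Rel k f v w) ∧
      ∀ u ∈ G, N.Rel k f v u → ∀ᵐ ω ∂P, f u ω ≤ f w ω + δ := by
  classical
  set S : Set E := {u | u ∈ G ∧ N.Rel k f v u} with hS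
  have hvS : v ∈ S := ⟨hv, N.rel_refl k f v⟩
  have hglue : ∀ u₁ ∈ S, ∀ u₂ ∈ S, ∃ w ∈ S, ∀ᵐ ω ∂P, f w ω = max (f u₁ ω) (f u₂ ω) := by
    intro u₁ hu₁ u₂ hu₂
    obtain ⟨w, hwG, hwrel, hwmax⟩ := N.glue2_max hGCC hf hu₁.1 hu₂.1 hu₁.2 hu₂.2
    exact ⟨w, ⟨hwG, hwrel⟩, hwmax⟩
  have hai : ∀ u : E, Integrable (fun ω => Real.arctan (f u ω)) P :=
    fun u => arctan_int (f u).aestronglyMeasurable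
  have hintb : ∀ u ∈ S, ∫ ω, Real.arctan (f u ω) ∂P ≤ Real.pi / 2 := by
    intro u hu
    calc ∫ ω, Real.arctan (f u ω) ∂P ≤ ∫ _ω, Real.pi / 2 ∂P :=
          integral_mono (hai u) (integrable_const _) fun ω => (Real.arctan_lt_pi_div_two _).le
      _ = Real.pi / 2 := by simp
  set T : Set ℝ := (fun u : E => ∫ ω, Real.arctan (f u ω) ∂P) '' S with hT
  have hTne : T.Nonempty := ⟨_, v, hvS, rfl⟩
  have hTb : BddAbove T := ⟨Real.pi / 2, by rintro r ⟨u, hu, rfl⟩; exact hintb u hu⟩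
  set m : ℝ := sSup T with hm
  have hex : ∀ j : ℕ, ∃ u, u ∈ S ∧ m - 1 / (j + 1) < ∫ ω, Real.arctan (f u ω) ∂P := by
    intro j
    have hlt : m - 1 / (j + 1 : ℝ) < m := sub_lt_self m (by positivity)
    obtain ⟨r, ⟨u, hu, rfl⟩, hr⟩ := exists_lt_of_lt_csSup hTne hlt
    exact ⟨u, hu, hr⟩
  choose w0 hw0S hw0i using hex
  choose gl hglS hglmax using hglue
  let Wz : ℕ → {u : E // u ∈ S} := fun j =>
    Nat.rec ⟨w0 0, hw0S 0⟩ (fun i p => ⟨gl p.1 p.2 (w0 (i + 1)) (hw0S (i + 1)),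
      hglS p.1 p.2 (w0 (i + 1)) (hw0S (i + 1))⟩) j
  set W : ℕ → E := fun j => (Wz j).1 with hW
  have hWS : ∀ j, W j ∈ S := fun j => (Wz j).2
  have hW0 : W 0 = w0 0 := rfl
  have hWsucc : ∀ j, ∀ᵐ ω ∂P, f (W (j + 1)) ω = max (f (W j) ω) (f (w0 (j + 1)) ω) :=
    fun j => hglmax (W j) ((Wz j).2) (w0 (j + 1)) (hw0S (j + 1))
  have hWmono : ∀ᵐ ω ∂P, ∀ j, f (W j) ω ≤ f (W (j + 1)) ω :=
    ae_all_iff.2 fun j => (hWsucc j).mono fun ω h => h ▸ le_max_left _ _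
  have hWgew0 : ∀ j, ∀ᵐ ω ∂P, f (w0 j) ω ≤ f (W j) ω := by
    intro j
    cases j with
    | zero => exact Filter.Eventually.of_forall fun ω => le_of_eq (by rw [hW0])
    | succ i => exact (hWsucc i).mono fun ω h => h ▸ le_max_right _ _
  have hIlb : ∀ j, m - 1 / (j + 1) ≤ ∫ ω, Real.arctan (f (W j) ω) ∂P := by
    intro j
    refine le_trans (hw0i j).le (integral_mono_ae (hai _) (hai _) ?_)
    exact (hWgew0 j).mono fun ω h => Real.arctan_strictMono.monotone h
  have hIub : ∀ j, ∫ ω, Real.arctan (f (W j) ω) ∂P ≤ m :=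
    fun j => le_csSup hTb ⟨W j, hWS j, rfl⟩
  set g : Ω → ℝ := fun ω => ⨆ j, min (f (W j) ω) (ξ ω) with hg
  have hgmeas : Measurable g :=
    Measurable.iSup fun j => ((f (W j)).stronglyMeasurable.measurable).min
      ξ.stronglyMeasurable.measurable
  have hkey : ∀ᵐ ω ∂P, (∀ j, f (W j) ω ≤ g ω) ∧
      Filter.Tendsto (fun j => f (W j) ω) Filter.atTop (nhds (g ω)) := by
    have hb : ∀ᵐ ω ∂P, ∀ j, f (W j) ω ≤ ξ ω := ae_all_iff.2 fun j => hξ _ (hWS j).1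
    filter_upwards [hb, hWmono] with ω h1 h2
    have hmin : ∀ j, min (f (W j) ω) (ξ ω) = f (W j) ω := fun j => min_eq_left (h1 j)
    have hgo : g ω = ⨆ j, f (W j) ω := iSup_congr hmin
    have hmono : Monotone fun j => f (W j) ω := monotone_nat_of_le_succ h2
    have hbdd : BddAbove (Set.range fun j => f (W j) ω) :=
      ⟨ξ ω, by rintro r ⟨j, rfl⟩; exact h1 j⟩
    constructor
    · intro j; rw [hgo]; exact le_ciSup hbdd j
    · rw [hgo]; exact tendsto_atTop_ciSup hmono hbdd
  have hgint : Integrable (fun ω => Real.arctan (g ω)) P := arctan_int hgmeas.aestronglyMeasurable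
  have habs : ∀ (r : ℝ), ‖Real.arctan r‖ ≤ Real.pi / 2 := fun r => by
    rw [Real.norm_eq_abs]
    exact abs_le.2 ⟨(Real.neg_pi_div_two_lt_arctan _).le, (Real.arctan_lt_pi_div_two _).le⟩
  have htendI : Filter.Tendsto (fun j => ∫ ω, Real.arctan (f (W j) ω) ∂P) Filter.atTop
      (nhds (∫ ω, Real.arctan (g ω) ∂P)) := by
    refine tendsto_integral_of_dominated_convergence (fun _ => Real.pi / 2)
      (fun j => (hai (W j)).1) (integrable_const _)
      (fun j => Filter.Eventually.of_forall fun ω => habs _) ?_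
    filter_upwards [hkey] with ω h
    exact (Real.continuous_arctan.tendsto _).comp h.2
  have htendm : Filter.Tendsto (fun j : ℕ => ∫ ω, Real.arctan (f (W j) ω) ∂P) Filter.atTop
      (nhds m) := by
    have hlow : Filter.Tendsto (fun j : ℕ => m - 1 / (j + 1 : ℝ)) Filter.atTop (nhds m) := by
      have : Filter.Tendsto (fun n : ℕ => 1 / ((n : ℝ) + 1)) Filter.atTop (nhds 0) :=
        tendsto_one_div_add_atTop_nhds_zero_nat
      have h2 := Filter.Tendsto.sub (tendsto_const_nhds (x := m)) this
      simpa using h2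
    exact tendsto_of_tendsto_of_tendsto_of_le_of_le hlow tendsto_const_nhds hIlb hIub
  have hgm : ∫ ω, Real.arctan (g ω) ∂P = m := tendsto_nhds_unique htendI htendm
  have hgsup : ∀ u ∈ S, ∀ᵐ ω ∂P, f u ω ≤ g ω := by
    intro u hu
    set q : ℕ → E := fun j => gl u hu (W j) (hWS j) with hqdef
    have hqS : ∀ j, q j ∈ S := fun j => hglS u hu (W j) (hWS j)
    have hqmax : ∀ j, ∀ᵐ ω ∂P, f (q j) ω = max (f u ω) (f (W j) ω) :=
      fun j => hglmax u hu (W j) (hWS j)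
    have hIq : ∀ j, ∫ ω, Real.arctan (f (q j) ω) ∂P ≤ m :=
      fun j => le_csSup hTb ⟨q j, hqS j, rfl⟩
    have htend2 : Filter.Tendsto (fun j => ∫ ω, Real.arctan (f (q j) ω) ∂P) Filter.atTop
        (nhds (∫ ω, Real.arctan (max (f u ω) (g ω)) ∂P)) := by
      refine tendsto_integral_of_dominated_convergence (fun _ => Real.pi / 2)
        (fun j => (hai (q j)).1) (integrable_const _)
        (fun j => Filter.Eventually.of_forall fun ω => habs _) ?_
      filter_upwards [hkey, ae_all_iff.2 hqmax] with ω h hq'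
      have h1 : Filter.Tendsto (fun j => max (f u ω) (f (W j) ω)) Filter.atTop
          (nhds (max (f u ω) (g ω))) := Filter.Tendsto.max tendsto_const_nhds h.2
      have h2 := (Real.continuous_arctan.tendsto _).comp h1
      exact h2.congr fun j => by rw [Function.comp_apply, hq' j]
    have hle : ∫ ω, Real.arctan (max (f u ω) (g ω)) ∂P ≤ m :=
      le_of_tendsto htend2 (Filter.Eventually.of_forall hIq)
    have hi1 : Integrable (fun ω => Real.arctan (max (f u ω) (g ω))) P :=
      arctan_int (((f u).stronglyMeasurable.measurable.max hgmeas).aestronglyMeasurable)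
    have hnn : 0 ≤ᵐ[P] fun ω => Real.arctan (max (f u ω) (g ω)) - Real.arctan (g ω) :=
      Filter.Eventually.of_forall fun ω =>
        sub_nonneg.2 (Real.arctan_strictMono.monotone (le_max_right _ _))
    have hZ : ∫ ω, (Real.arctan (max (f u ω) (g ω)) - Real.arctan (g ω)) ∂P = 0 := by
      rw [integral_sub hi1 hgint]
      have h1 : 0 ≤ ∫ ω, (Real.arctan (max (f u ω) (g ω)) - Real.arctan (g ω)) ∂P :=
        integral_nonneg_of_ae hnn
      rw [integral_sub hi1 hgint] at h1
      linarith [hgm ▸ hle]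
    have hz2 := (integral_eq_zero_iff_of_nonneg_ae hnn (hi1.sub hgint)).1 hZ
    filter_upwards [hz2] with ω h
    have h' : Real.arctan (max (f u ω) (g ω)) - Real.arctan (g ω) = 0 := h
    have h'' : max (f u ω) (g ω) = g ω := Real.arctan_injective (by linarith)
    exact max_eq_right_iff.1 h''
  set B : ℕ → Set Ω := fun j => {ω | g ω - f (W j) ω ≤ δ} with hB
  have hBmeas : ∀ j, MeasurableSet (B j) := fun j =>
    measurableSet_le (hgmeas.sub (f (W j)).stronglyMeasurable.measurable) measurable_const
  have hBcov : ∀ᵐ ω ∂P, ∃ j, ω ∈ B j := by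
    filter_upwards [hkey] with ω h
    obtain ⟨j, hj⟩ := (h.2.eventually (eventually_ge_nhds
      (show g ω - δ < g ω by linarith))).exists
    exact ⟨j, by simp only [hB, Set.mem_setOf_eq]; linarith⟩
  obtain ⟨A, hAmeas, hAdis, hAuniv, hAB⟩ := exists_partition B hBmeas hBcov
  obtain ⟨w, hwG, hwaeq⟩ :=
    N.glue_of_partition hGCC W (fun j => (hWS j).1) hAmeas hAdis hAuniv
  have hcov' : ∀ᵐ ω ∂P, ∃ j, ω ∈ A j := Filter.Eventually.of_forall fun ω =>
    Set.mem_iUnion.1 (hAuniv ▸ Set.mem_univ ω)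
  have hwrel : N.Rel k f v w := N.rel_local hf A hcov' W hwaeq fun j => (hWS j).2
  have hwlb : ∀ᵐ ω ∂P, g ω ≤ f w ω + δ := by
    filter_upwards [hcov', hAB, ae_all_iff.2 fun j => AeqOn.f_eq N hf (hwaeq j)]
      with ω h1 h2 h3
    obtain ⟨j, hj⟩ := h1
    have hBj : g ω - f (W j) ω ≤ δ := h2 j hj
    have hfw : f w ω = f (W j) ω := h3 j hj
    linarith
  refine ⟨w, ⟨hwG, hwrel⟩, fun u huG hur => ?_⟩
  filter_upwards [hgsup u ⟨huG, hur⟩, hwlb] with ω h1 h2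
  linarith

end RNModule

end Aux2
/-- Lemma 4.9. If `f ∈ E*` is bounded from above on `G` and
`⋁f(G) ≤ f(z) + ε` for some `z ∈ G`, `ε ∈ L⁰₊₊`, then there is `x₀ ∈ G` with
(1) `x₀ ∈ K(f,k) + z`, (2) `‖x₀ - z‖ ≤ k⁻¹ε`, (3) `G ∩ (K(f,k) + x₀) = {x₀}`. -/
theorem exists_cone_maximal
    {Ω : Type*} [MeasurableSpace Ω] {P : Measure Ω} [IsProbabilityMeasure P]
    {E : Type*} [AddCommGroup E] (N : RNModule P E) (hcomp : N.cComplete)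
    (hCCE : N.HasCC Set.univ)
    (k : L0 P) (hk : k ∈ L0pp P)
    (G : Set E) (hGcl : N.cClosed G) (hGCC : N.HasCC G)
    (f : E → L0 P) (hf : N.IsDual f)
    (hfbdd : ∃ ξ : L0 P, ∀ x ∈ G, ∀ᵐ ω ∂P, f x ω ≤ ξ ω)
    (ε : L0 P) (hε : ε ∈ L0pp P) (z : E) (hz : z ∈ G)
    (hsup : ∃ s : L0 P, IsSupOnR f G s ∧ ∀ᵐ ω ∂P, s ω ≤ f z ω + ε ω) :
    ∃ x₀ ∈ G,
      x₀ ∈ (fun y => y + z) '' N.Kcone f k ∧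
      (∀ᵐ ω ∂P, N.nm (x₀ - z) ω ≤ (k ω)⁻¹ * ε ω) ∧
      G ∩ ((fun y => y + x₀) '' N.Kcone f k) = {x₀} := by
  classical
  have hk' : ∀ᵐ ω ∂P, 0 < k ω := hk
  have hk0 : ∀ᵐ ω ∂P, 0 ≤ k ω := hk'.mono fun ω h => h.le
  obtain ⟨ξb, hξb⟩ := hfbdd
  obtain ⟨ξf, hξf0, hξfB⟩ := hf.2.2
  obtain ⟨s, hsupS, hsle⟩ := hsup
  set pw : ℕ → ℝ := fun n => (1 / 2 : ℝ) ^ n with hpw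
  have hpwpos : ∀ n, 0 < pw n := fun n => by positivity
  have hpwt : Filter.Tendsto pw Filter.atTop (nhds 0) :=
    tendsto_pow_atTop_nhds_zero_of_lt_one (by norm_num) (by norm_num)
  have hstep : ∀ v, v ∈ G → ∀ n : ℕ, ∃ w, (w ∈ G ∧ N.Rel k f v w) ∧
      ∀ u ∈ G, N.Rel k f v u → ∀ᵐ ω ∂P, f u ω ≤ f w ω + pw n :=
    fun v hv n => N.exists_almost_sup hGCC hk hf hξb hv (hpwpos n)
  choose st hst using hstep
  let xz : ℕ → {w : E // w ∈ G} := fun n =>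
    Nat.rec ⟨z, hz⟩ (fun i p => ⟨st p.1 p.2 (i + 1), (hst p.1 p.2 (i + 1)).1.1⟩) n
  set x : ℕ → E := fun n => (xz n).1 with hx
  have hxG : ∀ n, x n ∈ G := fun n => (xz n).2
  have hxrel : ∀ n, N.Rel k f (x n) (x (n + 1)) := fun n => (hst (x n) ((xz n).2) (n + 1)).1.2
  have hxkey : ∀ n, ∀ u ∈ G, N.Rel k f (x n) u →
      ∀ᵐ ω ∂P, f u ω ≤ f (x (n + 1)) ω + pw (n + 1) :=
    fun n => (hst (x n) ((xz n).2) (n + 1)).2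
  have hchain : ∀ a b, a ≤ b → N.Rel k f (x a) (x b) := by
    intro a b hab
    induction b, hab using Nat.le_induction with
    | base => exact N.rel_refl k f (x a)
    | succ b hab ih => exact N.rel_trans hk0 ih (hxrel b)
  have hkey' : ∀ n, ∀ u ∈ G, N.Rel k f (x (n + 1)) u →
      ∀ᵐ ω ∂P, f u ω ≤ f (x (n + 1)) ω + pw (n + 1) :=
    fun n u hu hr => hxkey n u hu (N.rel_trans hk0 (hxrel n) hr)
  have hkey'' : ∀ c, 1 ≤ c → ∀ u ∈ G, N.Rel k f (x c) u →
      ∀ᵐ ω ∂P, f u ω ≤ f (x c) ω + pw c := by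
    intro c hc
    obtain ⟨c', rfl⟩ : ∃ c', c = c' + 1 := ⟨c - 1, by omega⟩
    exact hkey' c'
  set Hs : L0 P → ℕ → Set E := fun e n =>
    {u | u ∈ G ∧ ∃ A : ℕ → Set Ω, (∀ j, MeasurableSet (A j)) ∧ (∀ᵐ ω ∂P, ∃ j, ω ∈ A j) ∧
      ∃ uu : ℕ → E, (∀ j, uu j ∈ G) ∧ (∀ j, N.Rel k f (x (j + n + 1)) (uu j)) ∧
        (∀ j, N.AeqOn u (uu j) (A j)) ∧
        (∀ j, ∀ᵐ ω ∂P, ω ∈ A j → 2 * pw (j + n + 1) ≤ k ω * e ω)} with hHs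
  have hsub : ∀ e n, Hs e n ⊆ G := fun e n u hu => hu.1
  have hrelH : ∀ e n, ∀ u ∈ Hs e n, N.Rel k f (x n) u := by
    rintro e n u ⟨huG, A, hA, hcov, uu, huuG, huurel, huuaeq, -⟩
    refine N.rel_local hf A hcov uu huuaeq fun j => ?_
    exact N.rel_trans hk0 (hchain n (j + n + 1) (by omega)) (huurel j)
  have hne : ∀ e, e ∈ L0pp P → ∀ n, (Hs e n).Nonempty := by
    intro e he n
    set B : ℕ → Set Ω := fun j => {ω | 2 * pw (j + n + 1) ≤ k ω * e ω} with hB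
    have hBmeas : ∀ j, MeasurableSet (B j) := fun j =>
      measurableSet_le measurable_const
        (k.stronglyMeasurable.measurable.mul e.stronglyMeasurable.measurable)
    have hBcov : ∀ᵐ ω ∂P, ∃ j, ω ∈ B j := by
      have he' : ∀ᵐ ω ∂P, 0 < e ω := he
      filter_upwards [hk', he'] with ω h1 h2
      have hpos : 0 < k ω * e ω := mul_pos h1 h2
      have ht : Filter.Tendsto (fun j : ℕ => 2 * pw (j + n + 1)) Filter.atTop (nhds 0) := by
        have h3 : Filter.Tendsto (fun j : ℕ => pw (j + n + 1)) Filter.atTop (nhds 0) :=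
          hpwt.comp (tendsto_add_atTop_nat (n + 1))
        simpa using h3.const_mul 2
      obtain ⟨j, hj⟩ := (ht.eventually (eventually_le_nhds hpos)).exists
      exact ⟨j, hj⟩
    obtain ⟨A, hAmeas, hAdis, hAuniv, hAB⟩ := exists_partition B hBmeas hBcov
    obtain ⟨u, huG, huaeq⟩ := N.glue_of_partition hGCC (fun j => x (j + n + 2))
      (fun j => by exact hxG (j + n + 2)) hAmeas hAdis hAuniv
    refine ⟨u, huG, A, hAmeas,
      Filter.Eventually.of_forall (fun ω => Set.mem_iUnion.1 (hAuniv ▸ Set.mem_univ ω)),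
      fun j => x (j + n + 2), fun j => by exact hxG (j + n + 2), fun j => hxrel (j + n + 1), huaeq, fun j => ?_⟩
    filter_upwards [hAB] with ω h hmem
    exact h j hmem
  have hmono : ∀ e e' n n', (∀ᵐ ω ∂P, e ω ≤ e' ω) → n' ≤ n → Hs e n ⊆ Hs e' n' := by
    rintro e e' n n' hee hnn u ⟨huG, A, hA, hcov, uu, huuG, huurel, huuaeq, huubd⟩
    set d := n - n' with hd
    refine ⟨huG, fun i => if d ≤ i then A (i - d) else ∅, ?_, ?_,
      fun i => if d ≤ i then uu (i - d) else x (i + n' + 2), ?_, ?_, ?_, ?_⟩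
    · intro i
      by_cases h : d ≤ i
      · simpa [h] using hA _
      · simp [h]
    · filter_upwards [hcov] with ω hw
      obtain ⟨j, hj⟩ := hw
      refine ⟨j + d, ?_⟩
      simp only [if_pos (show d ≤ j + d by omega), Nat.add_sub_cancel]
      exact hj
    · intro i
      by_cases h : d ≤ i
      · simpa [h] using huuG _
      · simp only [if_neg h]
        exact hxG (i + n' + 2)
    · intro i
      by_cases h : d ≤ i
      · simp only [if_pos h]
        have h2 := huurel (i - d)
        rwa [show i - d + n + 1 = i + n' + 1 from by omega] at h2
      · simp only [if_neg h]
        exact hxrel (i + n' + 1)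
    · intro i
      by_cases h : d ≤ i
      · simp only [if_pos h]
        exact huuaeq (i - d)
      · simp only [if_neg h]
        exact Filter.Eventually.of_forall fun ω hmem => absurd hmem (Set.notMem_empty ω)
    · intro i
      by_cases h : d ≤ i
      · simp only [if_pos h]
        filter_upwards [huubd (i - d), hee, hk0] with ω h1 h2 h3 hmem
        have h4 := h1 hmem
        rw [show i - d + n + 1 = i + n' + 1 from by omega] at h4
        exact h4.trans (mul_le_mul_of_nonneg_left h2 h3)
      · simp only [if_neg h]
        exact Filter.Eventually.of_forall fun ω hmem => absurd hmem (Set.notMem_empty ω)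
  have hdiam : ∀ e n, ∀ u ∈ Hs e n, ∀ u' ∈ Hs e n, ∀ᵐ ω ∂P, N.nm (u - u') ω ≤ e ω := by
    rintro e n u ⟨huG, A, hA, hcov, uu, huuG, huurel, huuaeq, huubd⟩
      u' ⟨huG', A', hA', hcov', uu', huuG', huurel', huuaeq', huubd'⟩
    have claim : ∀ i j, ∀ᵐ ω ∂P, ω ∈ A i → ω ∈ A' j → N.nm (u - u') ω ≤ e ω := by
      intro i j
      set a := i + n + 1 with ha
      set b := j + n + 1 with hb
      set c := min a b with hc
      have hca : c ≤ a := min_le_left _ _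
      have hcb : c ≤ b := min_le_right _ _
      have hc1 : 1 ≤ c := by omega
      have hrel1 : N.Rel k f (x c) (uu i) := N.rel_trans hk0 (hchain c a hca) (huurel i)
      have hrel2 : N.Rel k f (x c) (uu' j) := N.rel_trans hk0 (hchain c b hcb) (huurel' j)
      have hk1 : ∀ᵐ ω ∂P, f (uu i) ω ≤ f (x c) ω + pw c :=
        hkey'' c hc1 (uu i) (huuG i) hrel1
      have hk2 : ∀ᵐ ω ∂P, f (uu' j) ω ≤ f (x c) ω + pw c :=
        hkey'' c hc1 (uu' j) (huuG' j) hrel2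
      have hbd : ∀ᵐ ω ∂P, ω ∈ A i → ω ∈ A' j → 2 * pw c ≤ k ω * e ω := by
        rcases le_total a b with h | h
        · have hce : c = a := min_eq_left h
          filter_upwards [huubd i] with ω h1 hi hj
          rw [hce]
          exact h1 hi
        · have hce : c = b := min_eq_right h
          filter_upwards [huubd' j] with ω h1 hi hj
          rw [hce]
          exact h1 hj
      filter_upwards [RNModule.AeqOn.nm_eq N (huuaeq i) u', N.nm_sub_comm (uu i) u',
        RNModule.AeqOn.nm_eq N (huuaeq' j) (uu i), N.nm_sub_comm (uu' j) (uu i),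
        N.nm_tri (uu i) (x c) (uu' j), hrel1, hrel2, N.nm_sub_comm (x c) (uu' j),
        hk1, hk2, hbd, hk', hk0] with ω e1 e2 e3 e4 tri r1 r2 e5 k1 k2 bd hkpos hknn hi hj
      have heq : N.nm (u - u') ω = N.nm (uu i - uu' j) ω := by
        rw [e1 hi, e2, e3 hj, ← e4]
      have h6 : k ω * N.nm (uu i - uu' j) ω ≤
          (f (uu i) ω - f (x c) ω) + (f (uu' j) ω - f (x c) ω) := by
        calc k ω * N.nm (uu i - uu' j) ω
            ≤ k ω * (N.nm (uu i - x c) ω + N.nm (x c - uu' j) ω) :=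
              mul_le_mul_of_nonneg_left tri hknn
          _ = k ω * N.nm (uu i - x c) ω + k ω * N.nm (uu' j - x c) ω := by
              rw [mul_add, e5]
          _ ≤ _ := add_le_add r1 r2
      have h7 : k ω * N.nm (u - u') ω ≤ 2 * pw c := by
        rw [heq]
        linarith
      exact le_of_mul_le_mul_left (h7.trans (bd hi hj)) hkpos
    filter_upwards [hcov, hcov',
      ae_all_iff.2 fun i => ae_all_iff.2 fun j => claim i j] with ω h1 h2 h3
    obtain ⟨i, hi⟩ := h1
    obtain ⟨j, hj⟩ := h2
    exact h3 i j hi hj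
  have h1pp : (1 : L0 P) ∈ L0pp P := by
    have h := AEEqFun.coeFn_one (α := Ω) (μ := P) (β := ℝ)
    filter_upwards [h] with ω hh
    rw [hh]
    norm_num
  haveI hIne : Nonempty {q : L0 P × ℕ // q.1 ∈ L0pp P} := ⟨⟨(1, 0), h1pp⟩⟩
  set F : Filter E := ⨅ i : {q : L0 P × ℕ // q.1 ∈ L0pp P},
    Filter.principal (Hs i.1.1 i.1.2) with hF
  have hFmem : ∀ e, e ∈ L0pp P → ∀ n, Hs e n ∈ F := by
    intro e he n
    have h1 : F ≤ Filter.principal (Hs e n) := iInf_le _ (⟨(e, n), he⟩ : {q : L0 P × ℕ // q.1 ∈ L0pp P})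
    exact Filter.le_principal_iff.1 h1
  have hdir : Directed (· ≥ ·) fun i : {q : L0 P × ℕ // q.1 ∈ L0pp P} =>
      Filter.principal (Hs i.1.1 i.1.2) := by
    intro i₁ i₂
    have hinf : (i₁.1.1 ⊓ i₂.1.1) ∈ L0pp P := by
      have h1 : ∀ᵐ ω ∂P, 0 < i₁.1.1 ω := i₁.2
      have h2 : ∀ᵐ ω ∂P, 0 < i₂.1.1 ω := i₂.2
      filter_upwards [h1, h2, AEEqFun.coeFn_inf i₁.1.1 i₂.1.1] with ω a b c
      rw [c]
      exact lt_min a b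
    have hle1 : ∀ᵐ ω ∂P, (i₁.1.1 ⊓ i₂.1.1) ω ≤ i₁.1.1 ω := by
      filter_upwards [AEEqFun.coeFn_inf i₁.1.1 i₂.1.1] with ω c
      rw [c]; exact min_le_left _ _
    have hle2 : ∀ᵐ ω ∂P, (i₁.1.1 ⊓ i₂.1.1) ω ≤ i₂.1.1 ω := by
      filter_upwards [AEEqFun.coeFn_inf i₁.1.1 i₂.1.1] with ω c
      rw [c]; exact min_le_right _ _
    refine ⟨⟨(i₁.1.1 ⊓ i₂.1.1, max i₁.1.2 i₂.1.2), hinf⟩, ?_, ?_⟩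
    · exact Filter.principal_mono.2 (hmono _ _ _ _ hle1 (le_max_left _ _))
    · exact Filter.principal_mono.2 (hmono _ _ _ _ hle2 (le_max_right _ _))
  haveI hFne : F.NeBot := Filter.iInf_neBot_of_directed' hdir
    (fun i => Filter.principal_neBot_iff.2 (hne i.1.1 i.2 i.1.2))
  have hFG : F ≤ Filter.principal G :=
    Filter.le_principal_iff.2 (Filter.mem_of_superset (hFmem 1 h1pp 0) (hsub 1 0))
  have hcauchy : F ×ˢ F ≤ N.cUniformity := by
    unfold RNModule.cUniformity
    refine le_iInf fun e => le_iInf fun he => ?_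
    refine Filter.le_principal_iff.2 ?_
    refine Filter.mem_of_superset (Filter.prod_mem_prod (hFmem e he 0) (hFmem e he 0)) ?_
    rintro ⟨p, q⟩ ⟨hp, hq⟩
    exact hdiam e 0 p hp q hq
  obtain ⟨y, hy⟩ := hcomp F hFne hcauchy
  have hyG : y ∈ G := hGcl y (Filter.neBot_of_le (le_inf hy hFG))
  have hball : ∀ e, e ∈ L0pp P → {y' : E | ∀ᵐ ω ∂P, N.nm (y' - y) ω ≤ e ω} ∈ F := by
    intro e he
    have h1 : N.cNhds y ≤ Filter.principal {y' | ∀ᵐ ω ∂P, N.nm (y' - y) ω ≤ e ω} := by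
      unfold RNModule.cNhds
      exact iInf₂_le e he
    exact Filter.le_principal_iff.1 (le_trans hy h1)
  set cst : ℝ → L0 P := fun c => AEEqFun.const Ω c with hcst
  have hcstco : ∀ c : ℝ, ∀ᵐ ω ∂P, cst c ω = c := fun c => AEEqFun.coeFn_const Ω c
  have hcstpp : ∀ c : ℝ, 0 < c → cst c ∈ L0pp P := by
    intro c hc
    filter_upwards [hcstco c] with ω h
    rw [h]
    exact hc
  have hrelinf : ∀ n, N.Rel k f (x n) y := by
    intro n
    have hq : ∀ m : ℕ, ∀ᵐ ω ∂P,
        k ω * N.nm (y - x n) ω ≤ (k ω + ξf ω) * pw m + (f y ω - f (x n) ω) := by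
      intro m
      have hcm := hcstpp (pw m) (hpwpos m)
      obtain ⟨u, hu1, hu2⟩ := hFne.nonempty_of_mem
        (Filter.inter_mem (hFmem (cst (pw m)) hcm n) (hball (cst (pw m)) hcm))
      have hurel : N.Rel k f (x n) u := hrelH (cst (pw m)) n u hu1
      have hfu : f u = f y + f (u - y) := by
        have h := hf.1 y (u - y)
        rwa [add_sub_cancel] at h
      have hfuc : ∀ᵐ ω ∂P, f u ω = f y ω + f (u - y) ω := by
        rw [hfu]
        exact AEEqFun.coeFn_add _ _
      filter_upwards [hu2, hurel, N.nm_tri y u (x n), N.nm_sub_comm y u, hfuc,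
        hξfB (u - y), hcstco (pw m), hk0, hξf0] with ω b1 b2 b3 b4 b5 b6 b7 c1 c2
      have h1 : N.nm (u - y) ω ≤ pw m := by rw [← b7]; exact b1
      have h2 : f u ω ≤ f y ω + ξf ω * pw m := by
        have habs := (abs_le.1 b6).2
        have h3 : ξf ω * N.nm (u - y) ω ≤ ξf ω * pw m := mul_le_mul_of_nonneg_left h1 c2
        linarith
      have hb3 : N.nm (y - x n) ω ≤ N.nm (u - y) ω + N.nm (u - x n) ω := by
        rw [← b4]
        exact b3
      have h3 : k ω * N.nm (y - x n) ω ≤ k ω * N.nm (u - y) ω + k ω * N.nm (u - x n) ω := by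
        have := mul_le_mul_of_nonneg_left hb3 c1
        rwa [mul_add] at this
      have h4 : k ω * N.nm (u - y) ω ≤ k ω * pw m := mul_le_mul_of_nonneg_left h1 c1
      have h5 : (k ω + ξf ω) * pw m = k ω * pw m + ξf ω * pw m := by ring
      linarith
    filter_upwards [ae_all_iff.2 hq] with ω h
    have ht : Filter.Tendsto (fun m => (k ω + ξf ω) * pw m + (f y ω - f (x n) ω))
        Filter.atTop (nhds (f y ω - f (x n) ω)) := by
      have h1 := (hpwt.const_mul (k ω + ξf ω)).add_const (f y ω - f (x n) ω)
      rwa [mul_zero, zero_add] at h1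
    exact ge_of_tendsto ht (Filter.Eventually.of_forall h)
  have hmax : ∀ u ∈ G, N.Rel k f y u → u = y := by
    intro u huG hrel
    have h1 : ∀ n : ℕ, ∀ᵐ ω ∂P, f u ω ≤ f y ω + pw (n + 1) := by
      intro n
      have ha := hkey' n u huG (N.rel_trans hk0 (hrelinf (n + 1)) hrel)
      have hb := N.rel_f_le hk (hrelinf (n + 1))
      filter_upwards [ha, hb] with ω c1 c2
      linarith
    have h2 : ∀ᵐ ω ∂P, f u ω ≤ f y ω := by
      filter_upwards [ae_all_iff.2 h1] with ω h
      have ht : Filter.Tendsto (fun n : ℕ => f y ω + pw (n + 1)) Filter.atTop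
          (nhds (f y ω)) := by
        have h1' := ((hpwt.comp (tendsto_add_atTop_nat 1)).const_add (f y ω))
        rwa [add_zero] at h1'
      exact ge_of_tendsto ht (Filter.Eventually.of_forall h)
    have h3 : ∀ᵐ ω ∂P, N.nm (u - y) ω = 0 := by
      filter_upwards [hrel, h2, hk', N.nm_nonneg (u - y)] with ω a b c d
      nlinarith
    have h4 : N.nm (u - y) = 0 := by
      refine AEEqFun.ext ?_
      have hz0 := AEEqFun.coeFn_zero (α := Ω) (β := ℝ) (μ := P)
      filter_upwards [h3, hz0] with ω a b
      rw [a, b]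
      rfl
    have h5 : u - y = 0 := (N.nm_eq_zero_iff _).1 h4
    exact sub_eq_zero.1 h5
  have hrelz : N.Rel k f z y := hrelinf 0
  refine ⟨y, hyG, ?_, ?_, ?_⟩
  · refine ⟨y - z, ?_, by simp⟩
    have hfs : f (y - z) = f y - f z := N.f_sub hf y z
    have hfsc : ∀ᵐ ω ∂P, f (y - z) ω = f y ω - f z ω := by
      rw [hfs]
      exact AEEqFun.coeFn_sub _ _
    filter_upwards [hrelz, hfsc] with ω a b
    rw [b]
    exact a
  · filter_upwards [hrelz, hsupS.1 y hyG, hsle, hk'] with ω a b c d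
    have h1 : k ω * N.nm (y - z) ω ≤ ε ω := by linarith
    exact (le_inv_mul_iff₀ d).2 h1
  · ext u
    simp only [Set.mem_inter_iff, Set.mem_image, Set.mem_singleton_iff]
    constructor
    · rintro ⟨huG, v', hv'K, hv'⟩
      have hv'' : v' = u - y := eq_sub_of_add_eq hv'
      have hrelyu : N.Rel k f y u := by
        have hK : ∀ᵐ ω ∂P, k ω * N.nm (u - y) ω ≤ f (u - y) ω := hv'' ▸ hv'K
        have hfs : f (u - y) = f u - f y := N.f_sub hf u y
        have hfsc : ∀ᵐ ω ∂P, f (u - y) ω = f u ω - f y ω := by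
          rw [hfs]
          exact AEEqFun.coeFn_sub _ _
        filter_upwards [hK, hfsc] with ω a b
        rw [← b]
        exact a
      exact hmax u huG hrelyu
    · rintro rfl
      refine ⟨hyG, 0, ?_, zero_add _⟩
      have hf0 : f (0 : E) = 0 := N.f_zero hf
      have h0c : ∀ᵐ ω ∂P, f (0 : E) ω = 0 := by
        rw [hf0]
        exact AEEqFun.coeFn_zero
      filter_upwards [N.nm_zero_ae, h0c] with ω a b
      rw [a, b, mul_zero]

end GYY
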